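/- Every countably compact, complete (in the two-sided uniformity) subset of a uniform space is compact. In particular, a closed countably compact subset of a Raïkov-complete topological group is compact. -/

import Mathlib

/-- A subset `s` of a topological space is countably compact if every countable
open cover of `s` has a finite subcover. -/
def IsCountablyCompactSet {X : Type*} [TopologicalSpace X] (s : Set X) : Prop :=
  ∀ U : ℕ → Set X, (∀ n, IsOpen (U n)) → s ⊆ ⋃ n, U n → ∃ t : Finset ℕ, s ⊆ ⋃ n ∈ t, U n

/-- The filter of entourages of the two-sided uniformity of a topological group. -/
def twoSidedUniformity (G : Type*) [Group G] [TopologicalSpace G] : Filter (G × G) :=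
  (nhds (1 : G)).lift' (fun U => {p : G × G | p.1⁻¹ * p.2 ∈ U ∧ p.2 * p.1⁻¹ ∈ U})

/-- A topological group is Raïkov-complete if every Cauchy filter with respect to
its two-sided uniformity converges. -/
def RaikovComplete (G : Type*) [Group G] [TopologicalSpace G] : Prop :=
  ∀ f : Filter G, f.NeBot → f ×ˢ f ≤ twoSidedUniformity G → ∃ x : G, f ≤ nhds x

open Filter Set Topology Uniformity

/-- In a countably compact set, every sequence taking values in the set has a
cluster point in the set. -/
lemma IsCountablyCompactSet.exists_clusterPt {X : Type*} [TopologicalSpace X] {s : Set X}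
    (hs : IsCountablyCompactSet s) (x : ℕ → X) (hx : ∀ n, x n ∈ s) :
    ∃ y ∈ s, MapClusterPt y atTop x := by
  by_contra h
  push_neg at h
  set U : ℕ → Set X := fun N => (closure {z | ∃ n ≥ N, x n = z})ᶜ with hU
  have hopen : ∀ N, IsOpen (U N) := fun N => isClosed_closure.isOpen_compl
  have hcover : s ⊆ ⋃ N, U N := by
    intro y hy
    have hy' := h y hy
    rw [mapClusterPt_iff_frequently] at hy'
    push_neg at hy'
    obtain ⟨S, hS, hfreq⟩ := hy'
    obtain ⟨N, hN⟩ := eventually_atTop.1 hfreq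
    refine mem_iUnion.2 ⟨N, ?_⟩
    intro hcl
    obtain ⟨z, hzS, n, hnN, hnz⟩ := (mem_closure_iff_nhds.1 hcl) S hS
    exact hN n hnN (hnz ▸ hzS)
  obtain ⟨t, ht⟩ := hs U hopen hcover
  have hxt := ht (hx (t.sup id))
  obtain ⟨m, hmt, hm⟩ := mem_iUnion₂.1 hxt
  exact hm (subset_closure ⟨t.sup id, Finset.le_sup (f := id) hmt, rfl⟩)

/-- A countably compact subset of a uniform space is totally bounded. -/
lemma IsCountablyCompactSet.totallyBounded {α : Type*} [UniformSpace α] {s : Set α}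
    (hs : IsCountablyCompactSet s) : TotallyBounded s := by
  classical
  by_contra hc
  rw [TotallyBounded] at hc
  push_neg at hc
  obtain ⟨V, hV, hVsep⟩ := hc
  have hchoice : ∀ t : Finset α, ∃ z, z ∈ s ∧ ∀ y ∈ t, (z, y) ∉ V := by
    intro t
    have := hVsep ↑t t.finite_toSet
    rw [Set.not_subset] at this
    obtain ⟨z, hzs, hz⟩ := this
    refine ⟨z, hzs, fun y hy hzy => hz ?_⟩
    exact mem_iUnion₂.2 ⟨y, hy, hzy⟩
  choose F hFs hFV using hchoice
  let T : ℕ → Finset α := fun n => Nat.rec ∅ (fun _ t => insert (F t) t) n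
  let x : ℕ → α := fun n => F (T n)
  have hTmono : Monotone T := monotone_nat_of_le_succ fun n => Finset.subset_insert _ _
  have hxT : ∀ i j, i < j → x i ∈ T j := fun i j hij =>
    hTmono hij (Finset.mem_insert_self (F (T i)) (T i))
  have hsep : ∀ i j, i < j → (x j, x i) ∉ V := fun i j hij => hFV (T j) (x i) (hxT i j hij)
  obtain ⟨y, hys, hy⟩ := hs.exists_clusterPt x (fun n => hFs (T n))
  rw [mapClusterPt_iff_frequently] at hy
  obtain ⟨W, hW, hWsymm, hWV⟩ := comp_symm_mem_uniformity_sets hV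
  have hball : {z | (y, z) ∈ W} ∈ 𝓝 y := UniformSpace.ball_mem_nhds y hW
  have hfreq := hy _ hball
  obtain ⟨i, -, hi⟩ := frequently_atTop.1 hfreq 0
  obtain ⟨j, hji, hj⟩ := frequently_atTop.1 hfreq (i + 1)
  exact hsep i j hji (hWV ⟨y, hWsymm.symm _ _ hj, hi⟩)

lemma main_aux {α : Type*} [UniformSpace α] (s : Set α)
    (hcc : IsCountablyCompactSet s) (hcompl : IsComplete s) : IsCompact s :=
  isCompact_iff_totallyBounded_isComplete.2 ⟨hcc.totallyBounded, hcompl⟩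

theorem countably_compact_complete_is_compact :
    (∀ (α : Type*) [UniformSpace α] (s : Set α),
      IsCountablyCompactSet s → IsComplete s → IsCompact s)
    ∧
    (∀ (G : Type*) [Group G] [TopologicalSpace G] [IsTopologicalGroup G] [T2Space G],
      RaikovComplete G → ∀ s : Set G, IsClosed s → IsCountablyCompactSet s → IsCompact s) := by
  refine ⟨fun α _ s hcc hcompl => main_aux s hcc hcompl, ?_⟩
  intro G _ _ _ _ hRC s hscl hcc
  letI U : UniformSpace G :=
    { toTopologicalSpace := ‹TopologicalSpace G›
      uniformity := twoSidedUniformity G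
      symm := by
        intro S hS
        obtain ⟨V, hV, hVS⟩ := (Filter.mem_lift'_sets
          (by intro a b hab p hp; exact ⟨hab hp.1, hab hp.2⟩)).1 hS
        rw [Filter.mem_map]
        refine mem_of_superset (Filter.mem_lift' (inv_mem_nhds_one G hV)) ?_
        rintro ⟨a, b⟩ ⟨h1, h2⟩
        refine hVS ⟨?_, ?_⟩
        · simpa using (Set.mem_inv.1 h1)
        · simpa using (Set.mem_inv.1 h2)
      comp := by
        intro S hS
        obtain ⟨V, hV, hVS⟩ := (Filter.mem_lift'_sets
          (by intro a b hab p hp; exact ⟨hab hp.1, hab hp.2⟩)).1 hS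
        obtain ⟨W, hW, hWV⟩ := exists_nhds_one_split hV
        have hDW : {p : G × G | p.1⁻¹ * p.2 ∈ W ∧ p.2 * p.1⁻¹ ∈ W} ∈ twoSidedUniformity G :=
          Filter.mem_lift' hW
        refine mem_of_superset (Filter.mem_lift' hDW) ?_
        rintro ⟨a, c⟩ ⟨b, ⟨hab1, hab2⟩, ⟨hbc1, hbc2⟩⟩
        refine hVS ⟨?_, ?_⟩
        · have := hWV _ hab1 _ hbc1
          simpa [mul_assoc] using this
        · have := hWV _ hbc2 _ hab2
          simpa [mul_assoc] using this
      nhds_eq_comap_uniformity := by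
        intro x
        refine le_antisymm ?_ ?_
        · rw [← Filter.map_le_iff_le_comap, twoSidedUniformity, Filter.le_lift']
          intro V hV
          rw [Filter.mem_map]
          have h1 : (fun y => x⁻¹ * y) ⁻¹' V ∈ 𝓝 x := by
            have : Filter.Tendsto (fun y => x⁻¹ * y) (𝓝 x) (𝓝 (x⁻¹ * x)) :=
              (continuous_const.mul continuous_id).tendsto x
            rw [inv_mul_cancel] at this
            exact this hV
          have h2 : (fun y => y * x⁻¹) ⁻¹' V ∈ 𝓝 x := by
            have : Filter.Tendsto (fun y => y * x⁻¹) (𝓝 x) (𝓝 (x * x⁻¹)) :=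
              (continuous_id.mul continuous_const).tendsto x
            rw [mul_inv_cancel] at this
            exact this hV
          filter_upwards [h1, h2] with y hy1 hy2
          exact ⟨hy1, hy2⟩
        · intro S hS
          have hU : (fun y => x * y) ⁻¹' S ∈ 𝓝 (1 : G) := by
            have : Filter.Tendsto (fun y => x * y) (𝓝 1) (𝓝 (x * 1)) :=
              (continuous_const.mul continuous_id).tendsto 1
            rw [mul_one] at this
            exact this hS
          refine Filter.mem_comap.2 ⟨_, Filter.mem_lift' hU, ?_⟩
          intro y hy
          have := hy.1
          simpa using this }
  have hcompl : IsComplete s := by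
    intro f hf hfs
    obtain ⟨x, hx⟩ := hRC f hf.1 hf.2
    refine ⟨x, ?_, hx⟩
    have : ClusterPt x (𝓟 s) := hf.1.mono (le_inf hx hfs)
    rw [← hscl.closure_eq]
    exact mem_closure_iff_clusterPt.2 this
  exact main_aux s hcc hcompl
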